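/- Let q = p^m be a power of a prime p, a ∈ F_{q²} with a^{q+1} = −1, and L an n×n unitary matrix over F_{q²}. Suppose n ≢ 0 (mod p), δ = 0, γ ∈ F_{q²} satisfies γ^{q+1} = 2−n with 2−n ≠ 0 in F_{q²}, and θ ∈ F_{q²} satisfies θ^{q+1} = n. Then n−1+aθγ^q ≠ 0 in F_{q²}, and for β = (n−1+aθγ^q)^{−1}, α = aθβ, λ = a, the code generated by the bordered matrix G (with first row (θ, β,…,β, α, λ(L₁+⋯+Lₙ)) and (i+1)-st row (δ, (Jₙ−Iₙ)ᵢ, γ, aLᵢ)) is a Hermitian self-dual code of length 2n+2 and dimension n+1. -/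

import Mathlib

open Matrix BigOperators Finset

/-- The Hermitian inner product `x * y = ∑ i, x i * (y i)^q` over `F_{q²}`. -/
def hermInner (q : ℕ) {F : Type} [CommRing F] {ι : Type} [Fintype ι]
    (x y : ι → F) : F :=
  ∑ i, x i * y i ^ q

/-- The Hermitian dual of a set of vectors. -/
def hermDual (q : ℕ) {F : Type} [CommRing F] {ι : Type} [Fintype ι]
    (C : Set (ι → F)) : Set (ι → F) :=
  {y | ∀ x ∈ C, hermInner q x y = 0}

/-- The code generated by a matrix: the span of its rows. -/
def rowSpan {F : Type} [Field F] {k : ℕ} {ι : Type} (G : Matrix (Fin k) ι F) :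
    Submodule F (ι → F) :=
  Submodule.span F (Set.range fun i => G i)

private lemma sumB' {n : ℕ} {F : Type} [Field F] (i : Fin n) (b : F) :
    (∑ j : Fin n, (if j = i then 0 else 1) * b) = ((n:F) - 1) * b := by
  have h : ∀ j : Fin n, (if j = i then (0:F) else 1) * b = b - (if j = i then b else 0) := by
    intro j; split <;> ring
  rw [Finset.sum_congr rfl fun j _ => h j, Finset.sum_sub_distrib, Finset.sum_const,
    Finset.sum_ite_eq' Finset.univ i (fun _ => b), if_pos (Finset.mem_univ i)]
  simp only [Finset.card_univ, Fintype.card_fin, nsmul_eq_mul]; ring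

private lemma sumC' {n : ℕ} {F : Type} [Field F] (i j : Fin n) :
    (∑ k : Fin n, (if k = i then (0:F) else 1) * (if k = j then 0 else 1))
      = (n : F) - 2 + (if i = j then 1 else 0) := by
  have h : ∀ k : Fin n, (if k = i then (0:F) else 1) * (if k = j then 0 else 1)
      = 1 - (if k = i then (1:F) else 0) - (if k = j then (1:F) else 0)
        + (if k = i then (if k = j then (1:F) else 0) else 0) := by
    intro k
    rcases eq_or_ne k i with h1 | h1 <;> rcases eq_or_ne k j with h2 | h2 <;> simp [h1, h2]
  rw [Finset.sum_congr rfl fun k _ => h k]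
  rw [Finset.sum_add_distrib, Finset.sum_sub_distrib, Finset.sum_sub_distrib,
    Finset.sum_const, Finset.sum_ite_eq' Finset.univ i (fun _ => (1:F)),
    Finset.sum_ite_eq' Finset.univ j (fun _ => (1:F)),
    Finset.sum_ite_eq' Finset.univ i (fun k => if k = j then (1:F) else 0)]
  simp only [Finset.card_univ, Fintype.card_fin, nsmul_eq_mul, Finset.mem_univ, if_true]
  ring

/-- Theorem 1, case 2) of the paper. With `n ≢ 0 (mod p)`, `δ = 0`,
`γ^{q+1} = 2 - n ≠ 0`, `θ^{q+1} = n`, one has `n - 1 + aθγ^q ≠ 0`, and for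
`β = (n - 1 + aθγ^q)⁻¹`, `α = aθβ`, `λ = a`, the bordered matrix `G` generates a
Hermitian self-dual code of length `2n+2` and dimension `n+1`. -/
theorem stmt9 (p m q n : ℕ) (hp : p.Prime) (hm : 0 < m) (hq : q = p ^ m)
    (hnp : (n : ZMod p) ≠ 0)
    (F : Type) [Field F] [Fintype F] (hF : Fintype.card F = q ^ 2)
    (a : F) (ha : a ^ (q + 1) = -1)
    (L : Matrix (Fin n) (Fin n) F) (hL : L * (L.map (· ^ q))ᵀ = 1)
    (α β γ δ lam θ : F)
    (hδ : δ = 0)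
    (hγ : γ ^ (q + 1) = 2 - (n : F)) (hγ0 : (2 : F) - (n : F) ≠ 0)
    (hθ : θ ^ (q + 1) = (n : F))
    (hβ : β = ((n : F) - 1 + a * θ * γ ^ q)⁻¹)
    (hα : α = a * θ * β)
    (hlam : lam = a)
    (G : Matrix (Fin (n + 1)) ((Unit ⊕ Fin n) ⊕ (Unit ⊕ Fin n)) F)
    (hG1 : G 0 (Sum.inl (Sum.inl ())) = θ)
    (hG2 : ∀ j, G 0 (Sum.inl (Sum.inr j)) = β)
    (hG3 : G 0 (Sum.inr (Sum.inl ())) = α)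
    (hG4 : ∀ j, G 0 (Sum.inr (Sum.inr j)) = lam * ∑ k, L k j)
    (hG5 : ∀ i : Fin n, G i.succ (Sum.inl (Sum.inl ())) = δ)
    (hG6 : ∀ i j : Fin n, G i.succ (Sum.inl (Sum.inr j)) = if j = i then 0 else 1)
    (hG7 : ∀ i : Fin n, G i.succ (Sum.inr (Sum.inl ())) = γ)
    (hG8 : ∀ i j : Fin n, G i.succ (Sum.inr (Sum.inr j)) = a * L i j) :
    ((n : F) - 1 + a * θ * γ ^ q ≠ 0) ∧
    (rowSpan G : Set ((Unit ⊕ Fin n) ⊕ (Unit ⊕ Fin n) → F)) = hermDual q (rowSpan G) ∧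
    Module.finrank F (rowSpan G) = n + 1 := by
  haveI hcharp : CharP F p := by
    obtain ⟨k, hk, hcard⟩ := FiniteField.card F (ringChar F)
    have : ringChar F = p := by
      have h1 : (ringChar F) ∣ p ^ (2*m) := by
        have : ringChar F ∣ Fintype.card F := by
          rw [hcard]; exact dvd_pow_self _ (by positivity)
        rwa [hF, hq, ← pow_mul, mul_comm m 2] at this
      exact ((Nat.prime_dvd_prime_iff_eq hk hp).mp (hk.dvd_of_dvd_pow h1))
    rw [← this]; exact ringChar.charP F
  haveI : Fact p.Prime := ⟨hp⟩
  haveI : ExpChar F p := ExpChar.prime hp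
  have hq0 : q ≠ 0 := by rw [hq]; exact pow_ne_zero m hp.pos.ne'
  set φ : F →+* F := iterateFrobenius F p m with hφdef
  have hφ : ∀ x : F, φ x = x ^ q := fun x => by rw [hφdef, iterateFrobenius_def, hq]
  have hqq : ∀ x : F, (x ^ q) ^ q = x := by
    intro x; rw [← pow_mul, ← sq, ← hF, FiniteField.pow_card]
  have hS : ∀ (f : Fin n → F), (∑ k, f k) ^ q = ∑ k, (f k) ^ q := by
    intro f
    have := map_sum φ f Finset.univ
    simpa [hφ] using this
  have ha' : a ^ q * a = -1 := by rw [← pow_succ]; exact ha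
  have hθ' : θ ^ q * θ = (n : F) := by rw [← pow_succ]; exact hθ
  have hγ' : γ ^ q * γ = 2 - (n : F) := by rw [← pow_succ]; exact hγ
  -- part 1: nonzeroness
  have ht : (n : F) - 1 + a * θ * γ ^ q ≠ 0 := by
    intro hc
    have e1 : a * θ * γ ^ q = 1 - (n : F) := by linear_combination hc
    have e2 : a ^ q * θ ^ q * γ = 1 - (n : F) := by
      have h := congrArg φ e1
      rw [_root_.map_mul, _root_.map_mul, map_sub, _root_.map_one, map_natCast,
        hφ, hφ, hφ, hqq] at h
      exact h
    have e3 : (a * θ * γ ^ q) * (a ^ q * θ ^ q * γ) = (1 - (n:F)) * (1 - (n:F)) := by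
      linear_combination (a ^ q * θ ^ q * γ) * e1 + (1 - (n:F)) * e2
    have e4 : a ^ (q+1) * θ ^ (q+1) * γ ^ (q+1) = (1 - (n:F)) * (1 - (n:F)) := by
      rw [pow_succ, pow_succ, pow_succ]; linear_combination e3
    rw [ha, hθ, hγ] at e4
    exact one_ne_zero (α := F) (by linear_combination -e4)
  have hβinv : ((n : F) - 1 + a * θ * γ ^ q) * β = 1 := by
    rw [hβ]; exact mul_inv_cancel₀ ht
  have hβq : (((n : F) - 1) + a ^ q * θ ^ q * γ) * β ^ q = 1 := by
    have h := congrArg φ hβinv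
    rw [_root_.map_mul, map_add, map_sub, map_natCast, _root_.map_one,
      _root_.map_mul, _root_.map_mul, hφ, hφ, hφ, hφ, hqq] at h
    exact h
  have hLkey : ∀ i k : Fin n, (∑ j, L i j * (L k j) ^ q) = if i = k then 1 else 0 := by
    intro i k
    have h := congrFun (congrFun hL i) k
    simpa [Matrix.mul_apply, Matrix.one_apply, Matrix.transpose_apply, Matrix.map_apply] using h
  have hsum : ∀ x y : (Unit ⊕ Fin n) ⊕ (Unit ⊕ Fin n) → F,
      hermInner q x y = x (.inl (.inl ())) * (y (.inl (.inl ()))) ^ q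
      + (∑ j, x (.inl (.inr j)) * (y (.inl (.inr j))) ^ q)
      + (x (.inr (.inl ())) * (y (.inr (.inl ()))) ^ q
      + ∑ j, x (.inr (.inr j)) * (y (.inr (.inr j))) ^ q) := fun x y => by
    simp [hermInner, Fintype.sum_sum_type]
  -- the four cases
  have case00 : hermInner q (G 0) (G 0) = 0 := by
    rw [hsum]
    simp only [hG1, hG2, hG3, hG4]
    have hD : ∑ j, (lam * ∑ k, L k j) * (lam * ∑ k, L k j) ^ q
        = (a ^ q * a) * (n : F) := by
      have h1 : ∀ j, (lam * ∑ k, L k j) * (lam * ∑ k, L k j) ^ q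
          = (a ^ q * a) * ((∑ k, L k j) * (∑ k, (L k j) ^ q)) := by
        intro j; rw [mul_pow, hS, hlam]; ring
      rw [Finset.sum_congr rfl fun j _ => h1 j, ← Finset.mul_sum]
      congr 1
      calc ∑ j, (∑ k, L k j) * (∑ k, (L k j) ^ q)
          = ∑ j, ∑ k, ∑ k', L k j * (L k' j) ^ q := by
            refine Finset.sum_congr rfl fun j _ => ?_
            rw [Finset.sum_mul_sum]
        _ = ∑ k, ∑ j, ∑ k', L k j * (L k' j) ^ q := Finset.sum_comm
        _ = ∑ k, ∑ k', ∑ j, L k j * (L k' j) ^ q := by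
            exact Finset.sum_congr rfl fun k _ => Finset.sum_comm
        _ = ∑ k, ∑ k' : Fin n, if k = k' then (1:F) else 0 := by
            exact Finset.sum_congr rfl fun k _ => Finset.sum_congr rfl fun k' _ => hLkey k k'
        _ = (n : F) := by simp [Finset.sum_ite_eq, Finset.card_univ]
    rw [hD, Finset.sum_const, Finset.card_univ, Fintype.card_fin, nsmul_eq_mul]
    rw [hα]
    simp only [mul_pow]
    have haθ : (a ^ q * a) * (θ ^ q * θ) = -(n : F) := by rw [ha', hθ']; ring
    linear_combination hθ' + (β * β ^ q) * haθ + (n : F) * ha'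
  have case0i : ∀ i : Fin n, hermInner q (G 0) (G i.succ) = 0 := by
    intro i
    rw [hsum]
    simp only [hG1, hG2, hG3, hG4, hG5, hG6, hG7, hG8]
    have hmid : ∑ j : Fin n, β * ((if j = i then (0:F) else 1)) ^ q = ((n:F) - 1) * β := by
      have h1 : ∀ j : Fin n, β * ((if j = i then (0:F) else 1)) ^ q
          = (if j = i then (0:F) else 1) * β := by
        intro j; rcases eq_or_ne j i with h | h <;>
          simp [h, zero_pow hq0, mul_comm]
      rw [Finset.sum_congr rfl fun j _ => h1 j, sumB']
    have hlast : ∑ j, (lam * ∑ k, L k j) * (a * L i j) ^ q = (a ^ q * a) := by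
      calc ∑ j, (lam * ∑ k, L k j) * (a * L i j) ^ q
          = ∑ j, ∑ k, (a ^ q * a) * (L k j * (L i j) ^ q) := by
            refine Finset.sum_congr rfl fun j _ => ?_
            rw [mul_pow, hlam, Finset.mul_sum, Finset.sum_mul]
            exact Finset.sum_congr rfl fun k _ => by ring
        _ = ∑ k, ∑ j, (a ^ q * a) * (L k j * (L i j) ^ q) := Finset.sum_comm
        _ = ∑ k, (a ^ q * a) * ∑ j, L k j * (L i j) ^ q :=
            Finset.sum_congr rfl fun k _ => (Finset.mul_sum _ _ _).symm
        _ = ∑ k, (a ^ q * a) * (if k = i then 1 else 0) :=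
            Finset.sum_congr rfl fun k _ => by rw [hLkey k i]
        _ = a ^ q * a := by simp [mul_ite, mul_one, mul_zero, Finset.sum_ite_eq']
    rw [hmid, hlast, hδ, hα, zero_pow hq0]
    linear_combination hβinv + ha'
  have casei0 : ∀ i : Fin n, hermInner q (G i.succ) (G 0) = 0 := by
    intro i
    rw [hsum]
    simp only [hG1, hG2, hG3, hG4, hG5, hG6, hG7, hG8]
    have hmid : ∑ j : Fin n, (if j = i then (0:F) else 1) * β ^ q = ((n:F) - 1) * β ^ q :=
      sumB' i (β ^ q)
    have hlast : ∑ j, (a * L i j) * (lam * ∑ k, L k j) ^ q = (a ^ q * a) := by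
      calc ∑ j, (a * L i j) * (lam * ∑ k, L k j) ^ q
          = ∑ j, ∑ k, (a ^ q * a) * (L i j * (L k j) ^ q) := by
            refine Finset.sum_congr rfl fun j _ => ?_
            rw [mul_pow, hlam, hS, Finset.mul_sum, Finset.mul_sum]
            exact Finset.sum_congr rfl fun k _ => by ring
        _ = ∑ k, ∑ j, (a ^ q * a) * (L i j * (L k j) ^ q) := Finset.sum_comm
        _ = ∑ k, (a ^ q * a) * ∑ j, L i j * (L k j) ^ q :=
            Finset.sum_congr rfl fun k _ => (Finset.mul_sum _ _ _).symm
        _ = ∑ k, (a ^ q * a) * (if i = k then 1 else 0) :=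
            Finset.sum_congr rfl fun k _ => by rw [hLkey i k]
        _ = a ^ q * a := by simp [mul_ite, mul_one, mul_zero, Finset.sum_ite_eq]
    rw [hmid, hlast, hδ, hα]
    simp only [mul_pow]
    rw [zero_mul]
    linear_combination hβq + ha'
  have caseij : ∀ i j : Fin n, hermInner q (G i.succ) (G j.succ) = 0 := by
    intro i j
    rw [hsum]
    simp only [hG5, hG6, hG7, hG8]
    have hmid : ∑ k : Fin n, (if k = i then (0:F) else 1) * ((if k = j then (0:F) else 1)) ^ q
        = (n : F) - 2 + (if i = j then 1 else 0) := by
      have h1 : ∀ k : Fin n, (if k = i then (0:F) else 1) * ((if k = j then (0:F) else 1)) ^ q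
          = (if k = i then (0:F) else 1) * (if k = j then (0:F) else 1) := by
        intro k; rcases eq_or_ne k j with h | h <;> simp [h, zero_pow hq0]
      rw [Finset.sum_congr rfl fun k _ => h1 k, sumC']
    have hlast : ∑ k, (a * L i k) * (a * L j k) ^ q
        = (a ^ q * a) * (if i = j then 1 else 0) := by
      calc ∑ k, (a * L i k) * (a * L j k) ^ q
          = ∑ k, (a ^ q * a) * (L i k * (L j k) ^ q) := by
            refine Finset.sum_congr rfl fun k _ => ?_
            rw [mul_pow]; ring
        _ = (a ^ q * a) * ∑ k, L i k * (L j k) ^ q := (Finset.mul_sum _ _ _).symm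
        _ = (a ^ q * a) * (if i = j then 1 else 0) := by rw [hLkey i j]
    rw [hmid, hlast, hδ, zero_pow hq0, zero_mul]
    linear_combination hγ' + (if i = j then (1:F) else 0) * ha'
  have horth : ∀ i j : Fin (n+1), hermInner q (G i) (G j) = 0 := by
    intro i j
    induction i using Fin.cases with
    | zero =>
      induction j using Fin.cases with
      | zero => exact case00
      | succ j => exact case0i j
    | succ i =>
      induction j using Fin.cases with
      | zero => exact casei0 i
      | succ j => exact caseij i j

  -- basic nonvanishing facts
  haveI : NeZero p := ⟨hp.ne_zero⟩
  have hn0 : (n : F) ≠ 0 := by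
    intro h
    exact hnp ((ZMod.natCast_eq_zero_iff n p).mpr ((CharP.cast_eq_zero_iff F p n).mp h))
  have hθ0 : θ ≠ 0 := by
    intro h
    rw [h, zero_pow (Nat.succ_ne_zero q)] at hθ
    exact hn0 hθ.symm
  have ha0 : a ≠ 0 := by
    intro h
    rw [h, zero_pow (Nat.succ_ne_zero q)] at ha
    exact one_ne_zero (α := F) (neg_eq_zero.mp ha.symm)
  -- linear independence of the rows
  have hLI : LinearIndependent F (fun i : Fin (n+1) => G i) := by
    rw [Fintype.linearIndependent_iff]
    intro c hc
    have h0 : c 0 = 0 := by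
      have h := congrFun hc (Sum.inl (Sum.inl ()))
      simp only [Finset.sum_apply, Pi.smul_apply, smul_eq_mul, Pi.zero_apply] at h
      rw [Fin.sum_univ_succ] at h
      simp only [hG1, hG5, hδ, mul_zero, Finset.sum_const_zero, add_zero] at h
      exact (mul_eq_zero.mp h).resolve_right hθ0
    have hsucc : ∀ i : Fin n, c i.succ = 0 := by
      have hv : ∀ j, ∑ i : Fin n, (c i.succ * a) * L i j = 0 := by
        intro j
        have h := congrFun hc (Sum.inr (Sum.inr j))
        simp only [Finset.sum_apply, Pi.smul_apply, smul_eq_mul, Pi.zero_apply] at h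
        rw [Fin.sum_univ_succ, h0, zero_mul, zero_add] at h
        simp only [hG8] at h
        rw [← h]
        exact Finset.sum_congr rfl fun i _ => by ring
      set w : Fin n → F := fun i => c i.succ * a with hwdef
      have hw : w ᵥ* L = 0 := by
        funext j
        simpa [Matrix.vecMul, dotProduct, hwdef] using hv j
      have hw0 : w = 0 := by
        calc w = w ᵥ* (1 : Matrix (Fin n) (Fin n) F) := (Matrix.vecMul_one w).symm
          _ = w ᵥ* (L * (L.map (· ^ q))ᵀ) := by rw [hL]
          _ = (w ᵥ* L) ᵥ* (L.map (· ^ q))ᵀ := (Matrix.vecMul_vecMul w L _).symm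
          _ = 0 := by rw [hw, Matrix.zero_vecMul]
      intro i
      have : c i.succ * a = 0 := congrFun hw0 i
      exact (mul_eq_zero.mp this).resolve_right ha0
    intro i
    induction i using Fin.cases with
    | zero => exact h0
    | succ i => exact hsucc i
  -- dimension of the row span
  have hfr : Module.finrank F (rowSpan G) = n + 1 := by
    rw [rowSpan, finrank_span_eq_card hLI, Fintype.card_fin]
  -- rank and kernel of G
  have hrank : G.rank = n + 1 := by
    rw [← Matrix.rank_transpose, Matrix.rank, Matrix.range_mulVecLin]
    exact hfr
  have hker : Module.finrank F (LinearMap.ker (Matrix.mulVecLin G)) = n + 1 := by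
    have h3 := LinearMap.finrank_range_add_finrank_ker (Matrix.mulVecLin G)
    rw [Module.finrank_fintype_fun_eq_card] at h3
    have h4 : G.rank + Module.finrank F (LinearMap.ker (Matrix.mulVecLin G))
        = Fintype.card ((Unit ⊕ Fin n) ⊕ (Unit ⊕ Fin n)) := h3
    rw [hrank] at h4
    simp only [Fintype.card_sum, Fintype.card_unit, Fintype.card_fin] at h4
    omega
  -- cardinality of submodules
  have hcardmod : ∀ (M : Submodule F (((Unit ⊕ Fin n) ⊕ (Unit ⊕ Fin n)) → F)),
      Nat.card M = Fintype.card F ^ (Module.finrank F M) := by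
    intro M
    haveI : Fintype M := Fintype.ofFinite M
    rw [Nat.card_eq_fintype_card]
    exact Module.card_eq_pow_finrank (K := F)
  -- semilinearity facts
  have hadd : ∀ x y : F, (x + y) ^ q = x ^ q + y ^ q := by
    intro x y; rw [← hφ, ← hφ, ← hφ, map_add]
  -- the Hermitian dual of the row span
  have rightlem : ∀ y ∈ rowSpan G, ∀ i, hermInner q (G i) y = 0 := by
    intro y hy
    refine Submodule.span_induction ?_ ?_ ?_ ?_ hy
    · rintro y ⟨j, rfl⟩ i
      exact horth i j
    · intro i
      simp [hermInner, zero_pow hq0]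
    · intro u v hu hv ihu ihv i
      have h : hermInner q (G i) (u + v) = hermInner q (G i) u + hermInner q (G i) v := by
        simp only [hermInner, Pi.add_apply, ← Finset.sum_add_distrib]
        exact Finset.sum_congr rfl fun k _ => by rw [hadd]; ring
      rw [h, ihu i, ihv i, add_zero]
    · intro t u hu ihu i
      have h : hermInner q (G i) (t • u) = t ^ q * hermInner q (G i) u := by
        simp only [hermInner, Pi.smul_apply, smul_eq_mul, Finset.mul_sum, mul_pow]
        exact Finset.sum_congr rfl fun k _ => by ring
      rw [h, ihu i, mul_zero]
  have leftlem : ∀ y, (∀ i, hermInner q (G i) y = 0) → ∀ x ∈ rowSpan G, hermInner q x y = 0 := by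
    intro y hy x hx
    refine Submodule.span_induction ?_ ?_ ?_ ?_ hx
    · rintro x ⟨i, rfl⟩
      exact hy i
    · simp [hermInner]
    · intro u v hu hv ihu ihv
      have h : hermInner q (u + v) y = hermInner q u y + hermInner q v y := by
        simp [hermInner, Pi.add_apply, add_mul, Finset.sum_add_distrib]
      rw [h, ihu, ihv, add_zero]
    · intro t u hu ihu
      have h : hermInner q (t • u) y = t * hermInner q u y := by
        simp only [hermInner, Pi.smul_apply, smul_eq_mul, Finset.mul_sum]
        exact Finset.sum_congr rfl fun k _ => by ring
      rw [h, ihu, mul_zero]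
  have hsub : (rowSpan G : Set ((Unit ⊕ Fin n) ⊕ (Unit ⊕ Fin n) → F))
      ⊆ hermDual q (rowSpan G) := by
    intro y hy x hx
    exact leftlem y (rightlem y hy) x hx
  -- the dual as a preimage of a kernel under the Frobenius bijection
  set Frob : ((Unit ⊕ Fin n) ⊕ (Unit ⊕ Fin n) → F) → ((Unit ⊕ Fin n) ⊕ (Unit ⊕ Fin n) → F) :=
    fun y k => (y k) ^ q with hFrobdef
  have hmemker : ∀ y, Frob y ∈ LinearMap.ker (Matrix.mulVecLin G)
      ↔ ∀ i, hermInner q (G i) y = 0 := by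
    intro y
    rw [LinearMap.mem_ker]
    constructor
    · intro h i
      have := congrFun h i
      simpa [Matrix.mulVecLin, Matrix.mulVec, dotProduct, hFrobdef, hermInner] using this
    · intro h
      funext i
      simpa [Matrix.mulVecLin, Matrix.mulVec, dotProduct, hFrobdef, hermInner] using h i
  have hdualeq : hermDual q ((rowSpan G : Set ((Unit ⊕ Fin n) ⊕ (Unit ⊕ Fin n) → F)))
      = Frob ⁻¹' (LinearMap.ker (Matrix.mulVecLin G) : Set _) := by
    ext y
    simp only [Set.mem_preimage, SetLike.mem_coe, hmemker]
    constructor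
    · intro hy i
      exact hy (G i) (Submodule.subset_span ⟨i, rfl⟩)
    · intro hy x hx
      exact leftlem y hy x hx
  have hFrobInj : Function.Injective Frob := by
    intro y z h
    funext k
    apply φ.injective
    rw [hφ, hφ]
    exact congrFun h k
  have hFrobSurj : Function.Surjective Frob := Finite.injective_iff_surjective.mp hFrobInj
  have hcard2 : (hermDual q (rowSpan G : Set ((Unit ⊕ Fin n) ⊕ (Unit ⊕ Fin n) → F))).ncard
      = ((LinearMap.ker (Matrix.mulVecLin G) : Set (((Unit ⊕ Fin n) ⊕ (Unit ⊕ Fin n)) → F))).ncard := by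
    rw [hdualeq, ← Set.ncard_image_of_injective _ hFrobInj, Set.image_preimage_eq _ hFrobSurj]
  have hcardsub : ∀ (M : Submodule F (((Unit ⊕ Fin n) ⊕ (Unit ⊕ Fin n)) → F)),
      ((M : Set (((Unit ⊕ Fin n) ⊕ (Unit ⊕ Fin n)) → F))).ncard
        = Fintype.card F ^ (Module.finrank F M) := by
    intro M
    rw [← Nat.card_coe_set_eq, ← hcardmod M]
    rfl
  have heq : (rowSpan G : Set ((Unit ⊕ Fin n) ⊕ (Unit ⊕ Fin n) → F)) = hermDual q (rowSpan G) := by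
    apply Set.eq_of_subset_of_ncard_le hsub _ (Set.toFinite _)
    rw [hcard2, hcardsub (rowSpan G), hcardsub (LinearMap.ker (Matrix.mulVecLin G)), hker, hfr]
  exact ⟨ht, heq, hfr⟩
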